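/- Let 0 ≤ m ≤ k ≤ n and let W ∈ Gr₂(n,k). Then the number of subspaces V ∈ Gr₂(n,k) with dim(V ∩ W) = m equals 2^{(k−m)²} · [n−k choose k−m]₂ · [k choose m]₂. -/

import Mathlib

/-- The Gaussian binomial coefficient `[n choose k]₂`, as a rational number:
`∏_{i=0}^{k-1}(2^{n-i}-1) / ∏_{i=0}^{k-1}(2^{k-i}-1)`. -/
def gbinomQ (n k : ℕ) : ℚ :=
  (∏ i ∈ Finset.range k, ((2 : ℚ) ^ (n - i) - 1)) /
    (∏ i ∈ Finset.range k, ((2 : ℚ) ^ (k - i) - 1))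


open Submodule Set Module

section Helpers

variable {M : Type*} [AddCommGroup M] [Module (ZMod 2) M]

/-- Triangular condition: each vector lies in `V` and avoids `U ⊔ span of previous`. -/
def TCond (V U : Submodule (ZMod 2) M) {t : ℕ} (f : Fin t → M) : Prop :=
  ∀ j : Fin t, f j ∈ V ∧ f j ∉ U ⊔ Submodule.span (ZMod 2) (f '' {i | i < j})

omit [AddCommGroup M] [Module (ZMod 2) M] in
lemma image_Iio_castSucc {t : ℕ} (f : Fin (t + 1) → M) (j : Fin t) :
    f '' {i | i < Fin.castSucc j} = Fin.init f '' {i | i < j} := by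
  ext x
  constructor
  · rintro ⟨i, hi, rfl⟩
    have hiv : (i : ℕ) < (j : ℕ) := by simpa [Fin.lt_def] using hi
    have hi' : (i : ℕ) < t := hiv.trans j.isLt
    refine ⟨i.castLT hi', by simp only [Set.mem_setOf_eq, Fin.lt_def, Fin.coe_castLT]; exact hiv, ?_⟩
    show f (Fin.castSucc _) = f i
    rw [Fin.castSucc_castLT]
  · rintro ⟨i, hi, rfl⟩
    have hiv : (i : ℕ) < (j : ℕ) := by simpa only [Set.mem_setOf_eq, Fin.lt_def] using hi
    exact ⟨Fin.castSucc i, by simp only [Set.mem_setOf_eq, Fin.lt_def, Fin.coe_castSucc]; exact hiv, rfl⟩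

omit [AddCommGroup M] [Module (ZMod 2) M] in
lemma range_init_eq {t : ℕ} (f : Fin (t + 1) → M) :
    Set.range (Fin.init f) = f '' {i | i < Fin.last t} := by
  ext x
  constructor
  · rintro ⟨i, rfl⟩
    exact ⟨Fin.castSucc i, by simp only [Set.mem_setOf_eq, Fin.lt_def, Fin.coe_castSucc, Fin.val_last]; exact i.isLt, rfl⟩
  · rintro ⟨i, hi, rfl⟩
    have hi' : (i : ℕ) < t := by simpa only [Set.mem_setOf_eq, Fin.lt_def, Fin.val_last] using hi
    refine ⟨i.castLT hi', ?_⟩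
    show f (Fin.castSucc _) = f i
    rw [Fin.castSucc_castLT]

lemma tcond_init {V U : Submodule (ZMod 2) M} {t : ℕ} {f : Fin (t + 1) → M}
    (hf : TCond V U f) : TCond V U (Fin.init f) := by
  intro j
  refine ⟨(hf (Fin.castSucc j)).1, ?_⟩
  rw [← image_Iio_castSucc]
  exact (hf (Fin.castSucc j)).2

end Helpers

section Counting

variable {M : Type*} [AddCommGroup M] [Module (ZMod 2) M] [FiniteDimensional (ZMod 2) M]

lemma finrank_sup_span_singleton' {P : Submodule (ZMod 2) M} {x : M} (hx : x ∉ P) :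
    finrank (ZMod 2) ↥(P ⊔ Submodule.span (ZMod 2) {x}) = finrank (ZMod 2) P + 1 := by
  have hx0 : x ≠ 0 := fun h => hx (h ▸ P.zero_mem)
  have h1 : finrank (ZMod 2) ↥(Submodule.span (ZMod 2) {x}) = 1 := finrank_span_singleton hx0
  have hinf : P ⊓ Submodule.span (ZMod 2) {x} = ⊥ := by
    rw [eq_bot_iff]
    intro y hy
    rw [Submodule.mem_inf, Submodule.mem_span_singleton] at hy
    obtain ⟨hyP, c, rfl⟩ := hy
    rcases eq_or_ne c 0 with rfl | hc
    · simp
    · exact ((hx (by simpa [smul_smul, inv_mul_cancel₀ hc] using P.smul_mem c⁻¹ hyP))).elim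
  have h2 := Submodule.finrank_sup_add_finrank_inf_eq P (Submodule.span (ZMod 2) {x})
  rw [hinf, h1, finrank_bot] at h2
  omega

omit [AddCommGroup M] [Module (ZMod 2) M] [FiniteDimensional (ZMod 2) M] in
lemma range_eq_insert_last {t : ℕ} (f : Fin (t + 1) → M) :
    Set.range f = insert (f (Fin.last t)) (Set.range (Fin.init f)) := by
  ext x
  constructor
  · rintro ⟨i, rfl⟩
    rcases eq_or_ne i (Fin.last t) with rfl | hi
    · exact Set.mem_insert _ _
    · refine Set.mem_insert_iff.2 (Or.inr ⟨i.castLT (Fin.val_lt_last hi), ?_⟩)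
      show f (Fin.castSucc _) = f i
      rw [Fin.castSucc_castLT]
  · rintro (rfl | ⟨i, rfl⟩)
    exacts [⟨_, rfl⟩, ⟨_, rfl⟩]

lemma tcond_finrank {V U : Submodule (ZMod 2) M} :
    ∀ {t : ℕ} (f : Fin t → M), TCond V U f →
      finrank (ZMod 2) ↥(U ⊔ Submodule.span (ZMod 2) (Set.range f)) = finrank (ZMod 2) U + t := by
  intro t
  induction t with
  | zero =>
    intro f _
    rw [Set.range_eq_empty f, Submodule.span_empty, sup_bot_eq, Nat.add_zero]
  | succ t ih =>
    intro f hf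
    have ihf := ih (Fin.init f) (tcond_init hf)
    have hlast : f (Fin.last t) ∉ U ⊔ Submodule.span (ZMod 2) (Set.range (Fin.init f)) := by
      rw [range_init_eq]
      exact (hf (Fin.last t)).2
    have hre : U ⊔ Submodule.span (ZMod 2) (Set.range f) =
        (U ⊔ Submodule.span (ZMod 2) (Set.range (Fin.init f))) ⊔
          Submodule.span (ZMod 2) {f (Fin.last t)} := by
      rw [range_eq_insert_last f, Submodule.span_insert,
        sup_comm (Submodule.span (ZMod 2) {f (Fin.last t)}) _, ← sup_assoc]
    rw [hre, finrank_sup_span_singleton' hlast, ihf]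
    omega

end Counting

section CardCount

variable {M : Type*} [AddCommGroup M] [Module (ZMod 2) M] [Fintype M]

lemma card_submodule (P : Submodule (ZMod 2) M) :
    Nat.card P = 2 ^ finrank (ZMod 2) P := by
  classical
  rw [Nat.card_eq_fintype_card, card_eq_pow_finrank (K := ZMod 2), ZMod.card]

lemma card_avoid {V P : Submodule (ZMod 2) M} (hPV : P ≤ V) :
    Nat.card {x : M // x ∈ V ∧ x ∉ P} =
      2 ^ finrank (ZMod 2) V - 2 ^ finrank (ZMod 2) P := by
  classical
  have e1 : {x : M // x ∈ V ∧ x ∉ P} ≃ {y : ↥V // ¬ ((y : M) ∈ P)} :=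
    { toFun := fun x => ⟨⟨x.1, x.2.1⟩, x.2.2⟩
      invFun := fun y => ⟨y.1.1, y.1.2, y.2⟩
      left_inv := fun x => rfl
      right_inv := fun y => rfl }
  have e2 : {y : ↥V // (y : M) ∈ P} ≃ ↥P :=
    { toFun := fun y => ⟨y.1.1, y.2⟩
      invFun := fun z => ⟨⟨z.1, hPV z.2⟩, z.2⟩
      left_inv := fun y => rfl
      right_inv := fun z => rfl }
  have hV : Fintype.card ↥V = 2 ^ finrank (ZMod 2) V := by
    rw [← Nat.card_eq_fintype_card, card_submodule]
  have hP : Fintype.card {y : ↥V // (y : M) ∈ P} = 2 ^ finrank (ZMod 2) P := by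
    rw [Fintype.card_congr e2, ← Nat.card_eq_fintype_card, card_submodule]
  rw [Nat.card_congr e1, Nat.card_eq_fintype_card, Fintype.card_subtype_compl, hV, hP]

lemma tcond_snoc {V U : Submodule (ZMod 2) M} {t : ℕ} {f : Fin t → M} {x : M}
    (hf : TCond V U f) (hx : x ∈ V) (hx' : x ∉ U ⊔ Submodule.span (ZMod 2) (Set.range f)) :
    TCond V U (Fin.snoc f x) := by
  intro j
  refine Fin.lastCases ?_ ?_ j
  · rw [Fin.snoc_last]
    refine ⟨hx, ?_⟩
    have him : (Fin.snoc f x : Fin (t+1) → M) '' {i | i < Fin.last t} = Set.range f := by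
      rw [← range_init_eq, Fin.init_snoc]
    rw [him]
    exact hx'
  · intro j'
    rw [Fin.snoc_castSucc]
    refine ⟨(hf j').1, ?_⟩
    rw [image_Iio_castSucc, Fin.init_snoc]
    exact (hf j').2

lemma card_tcond (V U : Submodule (ZMod 2) M) (hUV : U ≤ V) (t : ℕ) :
    Nat.card {f : Fin t → M // TCond V U f} =
      ∏ j ∈ Finset.range t,
        (2 ^ finrank (ZMod 2) V - 2 ^ (finrank (ZMod 2) U + j)) := by
  classical
  induction t with
  | zero =>
    have hall : ∀ f : Fin 0 → M, TCond V U f := fun f j => j.elim0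
    rw [Nat.card_congr (Equiv.subtypeUnivEquiv hall), Finset.prod_range_zero, Nat.card_unique]
  | succ t ih =>
    have hfib : ∀ g : {f : Fin t → M // TCond V U f},
        Nat.card {f : {f : Fin (t+1) → M // TCond V U f} //
          (⟨Fin.init f.1, tcond_init f.2⟩ : {f : Fin t → M // TCond V U f}) = g} =
        2 ^ finrank (ZMod 2) V - 2 ^ (finrank (ZMod 2) U + t) := by
      intro g
      have hPV : U ⊔ Submodule.span (ZMod 2) (Set.range g.1) ≤ V :=
        sup_le hUV (Submodule.span_le.2 (by rintro _ ⟨i, rfl⟩; exact (g.2 i).1))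
      have e : {f : {f : Fin (t+1) → M // TCond V U f} //
            (⟨Fin.init f.1, tcond_init f.2⟩ : {f : Fin t → M // TCond V U f}) = g}
          ≃ {x : M // x ∈ V ∧ x ∉ U ⊔ Submodule.span (ZMod 2) (Set.range g.1)} :=
        { toFun := fun f => ⟨f.1.1 (Fin.last t), (f.1.2 (Fin.last t)).1, by
            have h := (f.1.2 (Fin.last t)).2
            rw [← range_init_eq] at h
            have hig : Fin.init f.1.1 = g.1 := congrArg Subtype.val f.2
            rwa [hig] at h⟩
          invFun := fun x => ⟨⟨Fin.snoc g.1 x.1, tcond_snoc g.2 x.2.1 x.2.2⟩,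
            by apply Subtype.ext; simp [Fin.init_snoc]⟩
          left_inv := fun f => by
            apply Subtype.ext; apply Subtype.ext
            have hig : Fin.init f.1.1 = g.1 := congrArg Subtype.val f.2
            show Fin.snoc g.1 (f.1.1 (Fin.last t)) = f.1.1
            rw [← hig, Fin.snoc_init_self]
          right_inv := fun x => by
            apply Subtype.ext
            simp [Fin.snoc_last] }
      rw [Nat.card_congr e, card_avoid hPV, tcond_finrank g.1 g.2]
    have e2 := Equiv.sigmaFiberEquiv (fun f : {f : Fin (t+1) → M // TCond V U f} =>
      (⟨Fin.init f.1, tcond_init f.2⟩ : {f : Fin t → M // TCond V U f}))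
    rw [← Nat.card_congr e2, Nat.card_eq_fintype_card, Fintype.card_sigma]
    simp_rw [← Nat.card_eq_fintype_card, hfib]
    rw [Finset.sum_const, Finset.card_univ, smul_eq_mul, ← Nat.card_eq_fintype_card, ih,
      Finset.prod_range_succ]

end CardCount

section Geometry

variable {M : Type*} [AddCommGroup M] [Module (ZMod 2) M] [FiniteDimensional (ZMod 2) M]
variable {W : Submodule (ZMod 2) M} {k m r : ℕ}

lemma tcond_span_le {V U : Submodule (ZMod 2) M} {t : ℕ} {f : Fin t → M} (hf : TCond V U f) :
    Submodule.span (ZMod 2) (Set.range f) ≤ V :=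
  Submodule.span_le.2 (by rintro _ ⟨i, rfl⟩; exact (hf i).1)

lemma tcond_g_finrank {V : Submodule (ZMod 2) M} {t : ℕ} {f : Fin t → M}
    (hf : TCond V ⊥ f) :
    finrank (ZMod 2) ↥(Submodule.span (ZMod 2) (Set.range f)) = t := by
  have := tcond_finrank f hf
  rwa [bot_sup_eq, finrank_bot, Nat.zero_add] at this

lemma claim1 (hW : finrank (ZMod 2) W = k) (hk : m + r = k)
    {g : Fin m → M} {h : Fin r → M}
    (hg : TCond W ⊥ g) (hh : TCond (⊤ : Submodule (ZMod 2) M) W h) :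
    finrank (ZMod 2) ↥(Submodule.span (ZMod 2) (Set.range g ∪ Set.range h)) = k ∧
      Submodule.span (ZMod 2) (Set.range g ∪ Set.range h) ⊓ W =
        Submodule.span (ZMod 2) (Set.range g) := by
  classical
  rw [Submodule.span_union]
  set G := Submodule.span (ZMod 2) (Set.range g) with hG
  set H := Submodule.span (ZMod 2) (Set.range h) with hH
  have hGW : G ≤ W := tcond_span_le hg
  have hGrank : finrank (ZMod 2) ↥G = m := tcond_g_finrank hg
  have hWH : finrank (ZMod 2) ↥(W ⊔ H) = k + r := by
    have := tcond_finrank h hh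
    rwa [hW] at this
  have hVW : (G ⊔ H) ⊔ W = W ⊔ H := by
    rw [sup_right_comm, sup_eq_right.2 hGW]
  have hHle : finrank (ZMod 2) ↥H ≤ r := by
    refine (finrank_span_le_card (Set.range h)).trans ?_
    rw [Set.toFinset_range]
    exact (Finset.card_image_le).trans (by simp)
  have hsum1 := Submodule.finrank_sup_add_finrank_inf_eq G H
  have hsum2 := Submodule.finrank_sup_add_finrank_inf_eq (G ⊔ H) W
  rw [hGrank] at hsum1
  rw [hVW, hWH, hW] at hsum2
  have hGle : G ≤ (G ⊔ H) ⊓ W := le_inf le_sup_left hGW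
  have hmono := Submodule.finrank_mono hGle
  rw [hGrank] at hmono
  have h1 : finrank (ZMod 2) ↥(G ⊔ H) = k := by omega
  have h2 : finrank (ZMod 2) ↥((G ⊔ H) ⊓ W) ≤ m := by omega
  exact ⟨h1, (Submodule.eq_of_le_of_finrank_le hGle (by rw [hGrank]; exact h2)).symm⟩

lemma fiber_iff (hW : finrank (ZMod 2) W = k) (hk : m + r = k)
    {V₀ : Submodule (ZMod 2) M} (hV₀ : finrank (ZMod 2) V₀ = k)
    (hV₀W : finrank (ZMod 2) ↥(V₀ ⊓ W) = m)
    (g : Fin m → M) (h : Fin r → M) :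
    (TCond W ⊥ g ∧ TCond (⊤ : Submodule (ZMod 2) M) W h) ∧
      Submodule.span (ZMod 2) (Set.range g ∪ Set.range h) = V₀ ↔
    TCond (V₀ ⊓ W) ⊥ g ∧ TCond V₀ (V₀ ⊓ W) h := by
  constructor
  · rintro ⟨⟨hg, hh⟩, hsp⟩
    have hc1 := claim1 hW hk hg hh
    rw [hsp] at hc1
    have hGeq : V₀ ⊓ W = Submodule.span (ZMod 2) (Set.range g) := hc1.2
    constructor
    · intro i
      refine ⟨?_, (hg i).2⟩
      rw [hGeq]
      exact Submodule.subset_span ⟨i, rfl⟩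
    · intro j
      refine ⟨?_, ?_⟩
      · rw [← hsp]
        exact Submodule.subset_span (Or.inr ⟨j, rfl⟩)
      · intro hmem
        exact (hh j).2 (sup_le_sup_right (inf_le_right : V₀ ⊓ W ≤ W) _ hmem)
  · rintro ⟨hg, hh⟩
    have hGle : Submodule.span (ZMod 2) (Set.range g) ≤ V₀ ⊓ W := tcond_span_le hg
    have hGrank : finrank (ZMod 2) ↥(Submodule.span (ZMod 2) (Set.range g)) = m :=
      tcond_g_finrank hg
    have hGeq : Submodule.span (ZMod 2) (Set.range g) = V₀ ⊓ W :=
      Submodule.eq_of_le_of_finrank_le hGle (by rw [hV₀W, hGrank])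
    refine ⟨⟨?_, ?_⟩, ?_⟩
    · intro i
      exact ⟨(Submodule.mem_inf.1 (hg i).1).2, (hg i).2⟩
    · intro j
      refine ⟨Submodule.mem_top, ?_⟩
      intro hmem
      set s := Submodule.span (ZMod 2) (h '' {i | i < j}) with hs
      have hsV₀ : s ≤ V₀ := Submodule.span_le.2 (by rintro _ ⟨i, _, rfl⟩; exact (hh i).1)
      obtain ⟨w, hw, y, hy, hsum⟩ := Submodule.mem_sup.1 hmem
      have hwV₀ : w ∈ V₀ := by
        have h1 : h j ∈ V₀ := (hh j).1
        have h2 : y ∈ V₀ := hsV₀ hy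
        have : w = h j - y := by rw [← hsum]; exact (add_sub_cancel_right w y).symm
        rw [this]
        exact Submodule.sub_mem _ h1 h2
      have : h j ∈ (V₀ ⊓ W) ⊔ s := by
        rw [← hsum]
        exact Submodule.add_mem_sup (Submodule.mem_inf.2 ⟨hwV₀, hw⟩) hy
      exact (hh j).2 this
    · have haux := tcond_finrank h hh
      rw [hV₀W] at haux
      rw [Submodule.span_union, hGeq]
      refine Submodule.eq_of_le_of_finrank_le (sup_le inf_le_left (tcond_span_le hh)) ?_
      rw [hV₀, haux]
      omega

end Geometry

section Main

variable {M : Type*} [AddCommGroup M] [Module (ZMod 2) M] [Fintype M]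

lemma main_count (W : Submodule (ZMod 2) M) {k m r : ℕ}
    (hW : finrank (ZMod 2) W = k) (hk : m + r = k) :
    Nat.card {V : Submodule (ZMod 2) M //
        finrank (ZMod 2) V = k ∧ finrank (ZMod 2) ↥(V ⊓ W) = m} *
      ((∏ i ∈ Finset.range m, (2 ^ m - 2 ^ i)) *
        (∏ j ∈ Finset.range r, (2 ^ k - 2 ^ (m + j)))) =
    (∏ i ∈ Finset.range m, (2 ^ k - 2 ^ i)) *
      (∏ j ∈ Finset.range r, (2 ^ finrank (ZMod 2) M - 2 ^ (k + j))) := by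
  classical
  haveI : Finite (Submodule (ZMod 2) M) :=
    Finite.of_injective _ (SetLike.coe_injective (A := Submodule (ZMod 2) M))
  haveI : Fintype (Submodule (ZMod 2) M) := Fintype.ofFinite _
  -- the total count
  have hT : Nat.card {p : (Fin m → M) × (Fin r → M) //
      TCond W ⊥ p.1 ∧ TCond (⊤ : Submodule (ZMod 2) M) W p.2} =
      (∏ i ∈ Finset.range m, (2 ^ k - 2 ^ i)) *
        (∏ j ∈ Finset.range r, (2 ^ finrank (ZMod 2) M - 2 ^ (k + j))) := by
    rw [Nat.card_congr (Equiv.subtypeProdEquivProd), Nat.card_prod,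
      card_tcond W ⊥ bot_le m, card_tcond ⊤ W le_top r]
    congr 1
    · apply Finset.prod_congr rfl
      intro i _
      rw [hW, finrank_bot, Nat.zero_add]
    · apply Finset.prod_congr rfl
      intro j _
      rw [hW, finrank_top]
  -- fiber map
  set ST := {V : Submodule (ZMod 2) M //
      finrank (ZMod 2) V = k ∧ finrank (ZMod 2) ↥(V ⊓ W) = m} with hST
  let Φ : {p : (Fin m → M) × (Fin r → M) //
      TCond W ⊥ p.1 ∧ TCond (⊤ : Submodule (ZMod 2) M) W p.2} → ST := fun p =>
    ⟨Submodule.span (ZMod 2) (Set.range p.1.1 ∪ Set.range p.1.2), by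
      have hc := claim1 hW hk p.2.1 p.2.2
      exact ⟨hc.1, by rw [hc.2]; exact tcond_g_finrank p.2.1⟩⟩
  have hfib : ∀ V₀ : ST, Nat.card {p // Φ p = V₀} =
      (∏ i ∈ Finset.range m, (2 ^ m - 2 ^ i)) *
        (∏ j ∈ Finset.range r, (2 ^ k - 2 ^ (m + j))) := by
    intro V₀
    have e : {p // Φ p = V₀} ≃ {p : (Fin m → M) × (Fin r → M) //
        TCond (V₀.1 ⊓ W) ⊥ p.1 ∧ TCond V₀.1 (V₀.1 ⊓ W) p.2} :=
      { toFun := fun q => ⟨q.1.1, (fiber_iff hW hk V₀.2.1 V₀.2.2 q.1.1.1 q.1.1.2).1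
          ⟨q.1.2, congrArg Subtype.val q.2⟩⟩
        invFun := fun p => ⟨⟨p.1, ((fiber_iff hW hk V₀.2.1 V₀.2.2 p.1.1 p.1.2).2 p.2).1⟩,
          Subtype.ext ((fiber_iff hW hk V₀.2.1 V₀.2.2 p.1.1 p.1.2).2 p.2).2⟩
        left_inv := fun q => by apply Subtype.ext; rfl
        right_inv := fun p => by apply Subtype.ext; rfl }
    rw [Nat.card_congr e, Nat.card_congr (Equiv.subtypeProdEquivProd), Nat.card_prod,
      card_tcond (V₀.1 ⊓ W) ⊥ bot_le m, card_tcond V₀.1 (V₀.1 ⊓ W) inf_le_left r]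
    congr 1
    · apply Finset.prod_congr rfl
      intro i _
      rw [V₀.2.2, finrank_bot, Nat.zero_add]
    · apply Finset.prod_congr rfl
      intro j _
      rw [V₀.2.1, V₀.2.2]
  have hsig : Nat.card (Σ y : ST, {x // Φ x = y}) = Nat.card ST *
      ((∏ i ∈ Finset.range m, (2 ^ m - 2 ^ i)) *
        (∏ j ∈ Finset.range r, (2 ^ k - 2 ^ (m + j)))) := by
    rw [Nat.card_eq_fintype_card, Fintype.card_sigma]
    simp_rw [← Nat.card_eq_fintype_card, hfib]
    rw [Finset.sum_const, Finset.card_univ, smul_eq_mul, Nat.card_eq_fintype_card]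
  rw [← hT, ← Nat.card_congr (Equiv.sigmaFiberEquiv Φ), hsig]

end Main

/-- For `0 ≤ m ≤ k ≤ n` and `W ∈ Gr₂(n,k)`, the number of subspaces
`V ∈ Gr₂(n,k)` with `dim(V ∩ W) = m` equals `2^{(k-m)²}·[n-k choose k-m]₂·[k choose m]₂`. -/
theorem card_subspaces_with_intersection_dim {n k m : ℕ} (hmk : m ≤ k) (hkn : k ≤ n)
    (W : Submodule (ZMod 2) (Fin n → ZMod 2)) (hW : Module.finrank (ZMod 2) W = k) :
    (Nat.card {V : Submodule (ZMod 2) (Fin n → ZMod 2) //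
        Module.finrank (ZMod 2) V = k ∧ Module.finrank (ZMod 2) ↥(V ⊓ W) = m} : ℚ) =
      2 ^ ((k - m) ^ 2) * gbinomQ (n - k) (k - m) * gbinomQ k m := by
  set r := k - m with hr
  have hk : m + r = k := by omega
  have hfr : finrank (ZMod 2) (Fin n → ZMod 2) = n := Module.finrank_fin_fun (ZMod 2)
  have key := main_count W hW hk
  rw [hfr] at key
  -- positivity of the "denominators"
  have hCpos : 0 < ∏ i ∈ Finset.range m, (2 ^ m - 2 ^ i) := by
    apply Finset.prod_pos
    intro i hi
    have : (2:ℕ) ^ i < 2 ^ m := Nat.pow_lt_pow_right (by norm_num) (Finset.mem_range.1 hi)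
    omega
  have hDpos : 0 < ∏ j ∈ Finset.range r, (2 ^ k - 2 ^ (m + j)) := by
    apply Finset.prod_pos
    intro j hj
    have : (2:ℕ) ^ (m + j) < 2 ^ k :=
      Nat.pow_lt_pow_right (by norm_num) (by have := Finset.mem_range.1 hj; omega)
    omega
  by_cases hcase : k + r ≤ n
  · -- main case
    have castAB : ∀ a b : ℕ, b ≤ a → ((2 ^ a - 2 ^ b : ℕ) : ℚ) = 2 ^ a - 2 ^ b := by
      intro a b hba
      have h2 : (2:ℕ) ^ b ≤ 2 ^ a := Nat.pow_le_pow_right (by norm_num) hba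
      rw [Nat.cast_sub h2]
      push_cast
      ring
    have hA : ((∏ i ∈ Finset.range m, (2 ^ k - 2 ^ i) : ℕ) : ℚ) =
        ∏ i ∈ Finset.range m, ((2:ℚ) ^ k - 2 ^ i) := by
      rw [Nat.cast_prod]
      exact Finset.prod_congr rfl fun i hi =>
        castAB _ _ (by have := Finset.mem_range.1 hi; omega)
    have hB : ((∏ j ∈ Finset.range r, (2 ^ n - 2 ^ (k + j)) : ℕ) : ℚ) =
        ∏ j ∈ Finset.range r, ((2:ℚ) ^ n - 2 ^ (k + j)) := by
      rw [Nat.cast_prod]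
      exact Finset.prod_congr rfl fun j hj =>
        castAB _ _ (by have := Finset.mem_range.1 hj; omega)
    have hC : ((∏ i ∈ Finset.range m, (2 ^ m - 2 ^ i) : ℕ) : ℚ) =
        ∏ i ∈ Finset.range m, ((2:ℚ) ^ m - 2 ^ i) := by
      rw [Nat.cast_prod]
      exact Finset.prod_congr rfl fun i hi =>
        castAB _ _ (by have := Finset.mem_range.1 hi; omega)
    have hD : ((∏ j ∈ Finset.range r, (2 ^ k - 2 ^ (m + j)) : ℕ) : ℚ) =
        ∏ j ∈ Finset.range r, ((2:ℚ) ^ k - 2 ^ (m + j)) := by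
      rw [Nat.cast_prod]
      exact Finset.prod_congr rfl fun j hj =>
        castAB _ _ (by have := Finset.mem_range.1 hj; omega)
    have keyQ : (Nat.card {V : Submodule (ZMod 2) (Fin n → ZMod 2) //
          Module.finrank (ZMod 2) V = k ∧ Module.finrank (ZMod 2) ↥(V ⊓ W) = m} : ℚ) *
        ((∏ i ∈ Finset.range m, ((2:ℚ) ^ m - 2 ^ i)) *
          (∏ j ∈ Finset.range r, ((2:ℚ) ^ k - 2 ^ (m + j)))) =
        (∏ i ∈ Finset.range m, ((2:ℚ) ^ k - 2 ^ i)) *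
          (∏ j ∈ Finset.range r, ((2:ℚ) ^ n - 2 ^ (k + j))) := by
      rw [← hA, ← hB, ← hC, ← hD, ← Nat.cast_mul, ← Nat.cast_mul, ← Nat.cast_mul, key]
    -- decompositions
    have PA : ∏ i ∈ Finset.range m, ((2:ℚ) ^ k - 2 ^ i) =
        (∏ i ∈ Finset.range m, (2:ℚ) ^ i) *
          ∏ i ∈ Finset.range m, ((2:ℚ) ^ (k - i) - 1) := by
      rw [← Finset.prod_mul_distrib]
      refine Finset.prod_congr rfl fun i hi => ?_
      have h1 : i + (k - i) = k := by have := Finset.mem_range.1 hi; omega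
      rw [mul_sub, mul_one, ← pow_add, h1]
    have PC : ∏ i ∈ Finset.range m, ((2:ℚ) ^ m - 2 ^ i) =
        (∏ i ∈ Finset.range m, (2:ℚ) ^ i) *
          ∏ i ∈ Finset.range m, ((2:ℚ) ^ (m - i) - 1) := by
      rw [← Finset.prod_mul_distrib]
      refine Finset.prod_congr rfl fun i hi => ?_
      have h1 : i + (m - i) = m := by have := Finset.mem_range.1 hi; omega
      rw [mul_sub, mul_one, ← pow_add, h1]
    have PB : ∏ j ∈ Finset.range r, ((2:ℚ) ^ n - 2 ^ (k + j)) =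
        (∏ j ∈ Finset.range r, (2:ℚ) ^ (m + j)) * (2 ^ ((k - m) ^ 2) *
          ∏ j ∈ Finset.range r, ((2:ℚ) ^ ((n - k) - j) - 1)) := by
      have step : ∀ j ∈ Finset.range r, (2:ℚ) ^ n - 2 ^ (k + j) =
          (2:ℚ) ^ (m + j) * ((2:ℚ) ^ (k - m) * ((2:ℚ) ^ ((n - k) - j) - 1)) := by
        intro j hj
        have hjr := Finset.mem_range.1 hj
        have h1 : m + j + (k - m) = k + j := by omega
        have h2 : k + j + ((n - k) - j) = n := by omega
        rw [← mul_assoc, ← pow_add, h1, mul_sub, mul_one, ← pow_add, h2]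
      rw [Finset.prod_congr rfl step, Finset.prod_mul_distrib, Finset.prod_mul_distrib,
        Finset.prod_const, Finset.card_range, ← pow_mul]
      have : (k - m) * r = (k - m) ^ 2 := by rw [pow_two, hr]
      rw [this]
    have PD : ∏ j ∈ Finset.range r, ((2:ℚ) ^ k - 2 ^ (m + j)) =
        (∏ j ∈ Finset.range r, (2:ℚ) ^ (m + j)) *
          ∏ j ∈ Finset.range r, ((2:ℚ) ^ ((k - m) - j) - 1) := by
      rw [← Finset.prod_mul_distrib]
      refine Finset.prod_congr rfl fun j hj => ?_
      have hjr := Finset.mem_range.1 hj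
      have h1 : m + j + ((k - m) - j) = k := by omega
      rw [mul_sub, mul_one, ← pow_add, h1]
    -- nonvanishing
    have hone : ∀ s : ℕ, 1 ≤ s → ((2:ℚ) ^ s - 1) ≠ 0 := by
      intro s hs
      have : (2:ℚ) ^ 0 < 2 ^ s := by
        apply pow_lt_pow_right₀ one_lt_two
        omega
      simp only [pow_zero] at this
      intro hzero
      nlinarith
    have hNC : (∏ i ∈ Finset.range m, ((2:ℚ) ^ (m - i) - 1)) ≠ 0 := by
      rw [Finset.prod_ne_zero_iff]
      intro i hi
      exact hone _ (by have := Finset.mem_range.1 hi; omega)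
    have hND : (∏ j ∈ Finset.range r, ((2:ℚ) ^ ((k - m) - j) - 1)) ≠ 0 := by
      rw [Finset.prod_ne_zero_iff]
      intro j hj
      exact hone _ (by have := Finset.mem_range.1 hj; omega)
    have hP1 : (∏ i ∈ Finset.range m, (2:ℚ) ^ i) ≠ 0 := by
      rw [Finset.prod_ne_zero_iff]
      intro i _
      positivity
    have hP2 : (∏ j ∈ Finset.range r, (2:ℚ) ^ (m + j)) ≠ 0 := by
      rw [Finset.prod_ne_zero_iff]
      intro j _
      positivity
    rw [PA, PB, PC, PD] at keyQ
    rw [← hr] at keyQ hND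
    rw [gbinomQ, gbinomQ]
    have hCD : ((∏ i ∈ Finset.range m, (2:ℚ) ^ i) *
          ∏ i ∈ Finset.range m, ((2:ℚ) ^ (m - i) - 1)) *
        ((∏ j ∈ Finset.range r, (2:ℚ) ^ (m + j)) *
          ∏ j ∈ Finset.range r, ((2:ℚ) ^ ((k - m) - j) - 1)) ≠ 0 :=
      mul_ne_zero (mul_ne_zero hP1 hNC) (mul_ne_zero hP2 hND)
    rw [← hr] at hCD
    rw [← eq_div_iff hCD] at keyQ
    rw [keyQ]
    field_simp
  · -- degenerate case : n < k + r, both sides vanish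
    have hnk : n - k < r := by omega
    have hB0 : (∏ j ∈ Finset.range r, (2 ^ n - 2 ^ (k + j))) = 0 := by
      apply Finset.prod_eq_zero (Finset.mem_range.2 hnk)
      have : k + (n - k) = n := by omega
      rw [this]
      omega
    have hcard0 : Nat.card {V : Submodule (ZMod 2) (Fin n → ZMod 2) //
        Module.finrank (ZMod 2) V = k ∧ Module.finrank (ZMod 2) ↥(V ⊓ W) = m} = 0 := by
      rw [hB0, Nat.mul_zero] at key
      rcases Nat.mul_eq_zero.1 key with h | h
      · exact h
      · rcases Nat.mul_eq_zero.1 h with h' | h' <;> omega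
    have hg0 : gbinomQ (n - k) (k - m) = 0 := by
      rw [gbinomQ]
      have hnum : (∏ i ∈ Finset.range (k - m), ((2:ℚ) ^ ((n - k) - i) - 1)) = 0 := by
        apply Finset.prod_eq_zero (Finset.mem_range.2 (by omega : n - k < k - m))
        have : (n - k) - (n - k) = 0 := by omega
        rw [this, pow_zero]
        ring
      rw [hnum, zero_div]
    rw [hcard0, hg0]
    norm_num
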